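/- (Stationary phase region bound) Let m, n ≥ 1 and t > 0, and set λ_0 = (2mt)^{−1/(2m−1)}. Let g : (0,∞) → ℂ be a C^1 function supported in [λ_0/2, 2λ_0] with ∫ |g'(λ)| dλ ≤ B. Then |∫_0^∞ e^{i(tλ^{2m} − λ)} g(λ) dλ| ≤ C_m (t λ_0^{2m−2})^{−1/2} B, where C_m depends only on m. -/

import Mathlib

open Complex MeasureTheory Real

noncomputable def spE (m : ℕ) (t : ℝ) : ℝ → ℂ :=
  fun l => Complex.exp (Complex.I * ((t * l ^ (2 * m) - l : ℝ) : ℂ))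

noncomputable def spPhi1 (m : ℕ) (t : ℝ) : ℝ → ℝ :=
  fun l => 2 * m * t * l ^ (2 * m - 1) - 1

noncomputable def spPhi2 (m : ℕ) (t : ℝ) : ℝ → ℝ :=
  fun l => 2 * m * (2 * m - 1) * t * l ^ (2 * m - 2)

lemma spPhi2_nonneg (m : ℕ) (hm : 1 ≤ m) (t : ℝ) (ht : 0 < t) (l : ℝ) :
    0 ≤ spPhi2 m t l := by
  have he : Even (2 * m - 2) := ⟨m - 1, by omega⟩
  have h1 : (0:ℝ) ≤ 2 * m * (2 * m - 1) * t := by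
    have hm' : (1:ℝ) ≤ (m:ℝ) := by exact_mod_cast hm
    have : (0:ℝ) ≤ 2 * (m:ℝ) - 1 := by linarith
    exact mul_nonneg (mul_nonneg (by positivity) this) ht.le
  exact mul_nonneg h1 (he.pow_nonneg l)

lemma continuous_spPhi1 (m : ℕ) (t : ℝ) : Continuous (spPhi1 m t) := by
  unfold spPhi1; fun_prop

lemma continuous_spPhi2 (m : ℕ) (t : ℝ) : Continuous (spPhi2 m t) := by
  unfold spPhi2; fun_prop

lemma continuous_spE (m : ℕ) (t : ℝ) : Continuous (spE m t) := by
  unfold spE; fun_prop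

lemma norm_spE (m : ℕ) (t : ℝ) (l : ℝ) : ‖spE m t l‖ = 1 := by
  unfold spE
  rw [mul_comm, Complex.norm_exp_ofReal_mul_I]

lemma hasDerivAt_spPhi (m : ℕ) (hm : 1 ≤ m) (t : ℝ) (l : ℝ) :
    HasDerivAt (fun l : ℝ => t * l ^ (2 * m) - l) (spPhi1 m t l) l := by
  have h1 : HasDerivAt (fun l : ℝ => t * l ^ (2 * m))
      (t * ((2 * m : ℕ) * l ^ (2 * m - 1))) l :=
    (hasDerivAt_pow (2 * m) l).const_mul t
  have h2 := h1.sub (hasDerivAt_id l)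
  refine h2.congr_deriv ?_
  unfold spPhi1
  push_cast
  ring

lemma hasDerivAt_spPhi1 (m : ℕ) (hm : 1 ≤ m) (t : ℝ) (l : ℝ) :
    HasDerivAt (spPhi1 m t) (spPhi2 m t l) l := by
  have h1 : HasDerivAt (fun l : ℝ => 2 * (m:ℝ) * t * l ^ (2 * m - 1))
      (2 * (m:ℝ) * t * ((2 * m - 1 : ℕ) * l ^ (2 * m - 1 - 1))) l :=
    (hasDerivAt_pow (2 * m - 1) l).const_mul (2 * (m:ℝ) * t)
  have h2 := h1.sub_const 1
  refine h2.congr_deriv ?_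
  unfold spPhi2
  have e1 : 2 * m - 1 - 1 = 2 * m - 2 := by omega
  have e2 : ((2 * m - 1 : ℕ) : ℝ) = 2 * (m:ℝ) - 1 := by
    have : 1 ≤ 2 * m := by omega
    push_cast [this]
    ring
  rw [e1, e2]
  ring

lemma hasDerivAt_spE (m : ℕ) (hm : 1 ≤ m) (t : ℝ) (l : ℝ) :
    HasDerivAt (spE m t) (Complex.I * (spPhi1 m t l) * spE m t l) l := by
  have h1 : HasDerivAt (fun l : ℝ => ((t * l ^ (2 * m) - l : ℝ) : ℂ))
      ((spPhi1 m t l : ℝ) : ℂ) l := (hasDerivAt_spPhi m hm t l).ofReal_comp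
  have h2 := (h1.const_mul Complex.I).cexp
  refine h2.congr_deriv ?_
  unfold spE
  ring
lemma sp_osc (m : ℕ) (hm : 1 ≤ m) (t : ℝ) (ht : 0 < t) (p q ε : ℝ)
    (hpq : p ≤ q) (hε : 0 < ε) (h : ∀ l ∈ Set.Icc p q, ε ≤ |spPhi1 m t l|) :
    ‖∫ l in p..q, spE m t l‖ ≤ 4 / ε := by
  set φ1 := spPhi1 m t with hφ1
  set φ2 := spPhi2 m t with hφ2
  set E := spE m t with hE
  have hne : ∀ l ∈ Set.Icc p q, φ1 l ≠ 0 := fun l hl => by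
    have := h l hl
    intro h0
    rw [h0] at this
    simp at this
    linarith
  have huIcc : Set.uIcc p q = Set.Icc p q := Set.uIcc_of_le hpq
  set D : ℝ → ℂ := fun l => Complex.I * (φ2 l : ℂ) * E l / ((φ1 l : ℂ))^2 with hD
  set h₀ : ℝ → ℂ := fun l => E l / (Complex.I * (φ1 l : ℂ)) with hh₀
  have hder : ∀ l ∈ Set.Icc p q, HasDerivAt h₀ (E l + D l) l := by
    intro l hl
    have hu : HasDerivAt E (Complex.I * (φ1 l : ℂ) * E l) l := hasDerivAt_spE m hm t l
    have hv : HasDerivAt (fun l : ℝ => Complex.I * (φ1 l : ℂ))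
        (Complex.I * (φ2 l : ℂ)) l :=
      ((hasDerivAt_spPhi1 m hm t l).ofReal_comp).const_mul Complex.I
    have hvl : Complex.I * (φ1 l : ℂ) ≠ 0 := by
      simp [Complex.I_ne_zero, Complex.ofReal_eq_zero, hne l hl]
    have hd := hu.div hv hvl
    refine hd.congr_deriv ?_
    have hφ1l : (φ1 l : ℂ) ≠ 0 := by
      simp [Complex.ofReal_eq_zero, hne l hl]
    simp only [hD]
    field_simp
    ring_nf
    simp only [Complex.I_sq, show Complex.I^3 = -Complex.I from by
      rw [pow_succ, Complex.I_sq]; ring]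
    ring
  -- continuity facts
  have hcE : Continuous E := continuous_spE m t
  have hcφ1C : Continuous (fun l => (φ1 l : ℂ)) := by
    have := continuous_spPhi1 m t; rw [← hφ1] at this; fun_prop
  have hcφ2C : Continuous (fun l => (φ2 l : ℂ)) := by
    have := continuous_spPhi2 m t; rw [← hφ2] at this; fun_prop
  have hcD : ContinuousOn D (Set.Icc p q) := by
    apply ContinuousOn.div
    · exact ((continuous_const.mul hcφ2C).mul hcE).continuousOn
    · exact (hcφ1C.pow 2).continuousOn
    · intro l hl
      exact pow_ne_zero 2 (by simpa [Complex.ofReal_eq_zero] using hne l hl)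
  have hintE : IntervalIntegrable E volume p q := hcE.intervalIntegrable p q
  have hintD : IntervalIntegrable D volume p q := by
    apply ContinuousOn.intervalIntegrable; rw [huIcc]; exact hcD
  -- FTC for h₀
  have hFTC : ∫ l in p..q, (E l + D l) = h₀ q - h₀ p := by
    apply intervalIntegral.integral_eq_sub_of_hasDerivAt
    · rw [huIcc]; exact hder
    · exact hintE.add hintD
  have hsplit : ∫ l in p..q, E l = h₀ q - h₀ p - ∫ l in p..q, D l := by
    rw [← hFTC, intervalIntegral.integral_add hintE hintD]; ring
  -- bound ‖h₀‖
  have hnh₀ : ∀ l ∈ Set.Icc p q, ‖h₀ l‖ ≤ 1 / ε := by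
    intro l hl
    have hnE : ‖E l‖ = 1 := norm_spE m t l
    have : ‖h₀ l‖ = 1 / |φ1 l| := by
      rw [hh₀]
      rw [norm_div, hnE, norm_mul, Complex.norm_I, Complex.norm_real,
        Real.norm_eq_abs, one_mul]
    rw [this]
    apply one_div_le_one_div_of_le hε (h l hl)
  -- FTC for 1/φ1
  have hinv : ∫ l in p..q, φ2 l / (φ1 l)^2 = (-(φ1 q)⁻¹) - (-(φ1 p)⁻¹) := by
    apply intervalIntegral.integral_eq_sub_of_hasDerivAt
    · intro l hl
      rw [huIcc] at hl
      have := ((hasDerivAt_spPhi1 m hm t l).inv (hne l hl)).neg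
      refine this.congr_deriv ?_
      rw [← hφ1, ← hφ2]
      ring
    · apply ContinuousOn.intervalIntegrable
      rw [huIcc]
      apply ContinuousOn.div
      · exact (continuous_spPhi2 m t).continuousOn
      · exact ((continuous_spPhi1 m t).pow 2).continuousOn
      · intro l hl; exact pow_ne_zero 2 (hne l hl)
  -- bound ‖∫ D‖
  have hnD : ‖∫ l in p..q, D l‖ ≤ 2 / ε := by
    have h1 : ‖∫ l in p..q, D l‖ ≤ ∫ l in p..q, ‖D l‖ :=
      intervalIntegral.norm_integral_le_integral_norm hpq
    have h2 : ∀ l ∈ Set.Icc p q, ‖D l‖ = φ2 l / (φ1 l)^2 := by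
      intro l hl
      have hnE : ‖E l‖ = 1 := norm_spE m t l
      simp only [hD, norm_div, norm_mul, Complex.norm_real, Real.norm_eq_abs,
        hnE, Complex.norm_I, norm_pow]
      rw [_root_.sq_abs, _root_.abs_of_nonneg (spPhi2_nonneg m hm t ht l)]
      ring
    have h3 : ∫ l in p..q, ‖D l‖ = ∫ l in p..q, φ2 l / (φ1 l)^2 := by
      apply intervalIntegral.integral_congr
      intro l hl; rw [huIcc] at hl; exact h2 l hl
    rw [h3, hinv] at h1
    have hp' : ε ≤ |φ1 p| := h p (Set.mem_Icc.mpr ⟨le_rfl, hpq⟩)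
    have hq' : ε ≤ |φ1 q| := h q (Set.mem_Icc.mpr ⟨hpq, le_rfl⟩)
    have hbp : |(φ1 p)⁻¹| ≤ 1 / ε := by
      rw [abs_inv]
      rw [inv_eq_one_div]
      apply one_div_le_one_div_of_le hε hp'
    have hbq : |(φ1 q)⁻¹| ≤ 1 / ε := by
      rw [abs_inv, inv_eq_one_div]
      apply one_div_le_one_div_of_le hε hq'
    have : (-(φ1 q)⁻¹) - (-(φ1 p)⁻¹) ≤ 2 / ε := by
      have := neg_abs_le ((φ1 q)⁻¹)
      have := le_abs_self ((φ1 p)⁻¹)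
      have h2ε : 2 / ε = 1/ε + 1/ε := by ring
      linarith
    linarith
  -- combine
  rw [hsplit]
  have hq0 : ‖h₀ q‖ ≤ 1 / ε := hnh₀ q (Set.mem_Icc.mpr ⟨hpq, le_rfl⟩)
  have hp0 : ‖h₀ p‖ ≤ 1 / ε := hnh₀ p (Set.mem_Icc.mpr ⟨le_rfl, hpq⟩)
  calc ‖h₀ q - h₀ p - ∫ l in p..q, D l‖
      ≤ ‖h₀ q - h₀ p‖ + ‖∫ l in p..q, D l‖ := norm_sub_le _ _
    _ ≤ (‖h₀ q‖ + ‖h₀ p‖) + ‖∫ l in p..q, D l‖ := by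
        have := norm_sub_le (h₀ q) (h₀ p); linarith
    _ ≤ 1/ε + 1/ε + 2/ε := by linarith
    _ = 4 / ε := by ring
noncomputable def spLam (m : ℕ) (t : ℝ) : ℝ := (2 * m * t) ^ (-(1 : ℝ) / (2 * m - 1))

noncomputable def spMu (m : ℕ) (t : ℝ) : ℝ :=
  2 * m * (2 * m - 1) * t * (spLam m t / 2) ^ (2 * m - 2)

lemma spLam_pos (m : ℕ) (hm : 1 ≤ m) (t : ℝ) (ht : 0 < t) : 0 < spLam m t := by
  apply Real.rpow_pos_of_pos
  have : (1:ℝ) ≤ (m:ℝ) := by exact_mod_cast hm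
  nlinarith

lemma spMu_pos (m : ℕ) (hm : 1 ≤ m) (t : ℝ) (ht : 0 < t) : 0 < spMu m t := by
  unfold spMu
  have h1 : (1:ℝ) ≤ (m:ℝ) := by exact_mod_cast hm
  have h2 : (0:ℝ) < spLam m t / 2 := by
    have := spLam_pos m hm t ht; linarith
  have := pow_pos h2 (2 * m - 2)
  have h3 : (0:ℝ) < 2 * (m:ℝ) - 1 := by linarith
  positivity

lemma spPhi1_crit (m : ℕ) (hm : 1 ≤ m) (t : ℝ) (ht : 0 < t) :
    spPhi1 m t (spLam m t) = 0 := by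
  have h1 : (1:ℝ) ≤ (m:ℝ) := by exact_mod_cast hm
  have hX : (0:ℝ) < 2 * m * t := by nlinarith
  have hc : ((2 * m - 1 : ℕ) : ℝ) = 2 * (m:ℝ) - 1 := by
    have : 1 ≤ 2 * m := by omega
    push_cast [this]
    ring
  have hc0 : (2 * (m:ℝ) - 1) ≠ 0 := by linarith
  have key : (spLam m t) ^ (2 * m - 1) = (2 * m * t)⁻¹ := by
    rw [← Real.rpow_natCast (spLam m t) (2 * m - 1), hc]
    unfold spLam
    rw [← Real.rpow_mul hX.le]
    have : -(1 : ℝ) / (2 * m - 1) * (2 * (m:ℝ) - 1) = -1 := by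
      field_simp
    rw [this, Real.rpow_neg_one]
  unfold spPhi1
  rw [key, mul_inv_cancel₀ hX.ne']
  ring

lemma spPhi2_ge (m : ℕ) (hm : 1 ≤ m) (t : ℝ) (ht : 0 < t) (l : ℝ)
    (hl : spLam m t / 2 ≤ l) : spMu m t ≤ spPhi2 m t l := by
  unfold spMu spPhi2
  have h1 : (1:ℝ) ≤ (m:ℝ) := by exact_mod_cast hm
  have h2 : (0:ℝ) ≤ spLam m t / 2 := by
    have := spLam_pos m hm t ht; linarith
  have hp : (spLam m t / 2) ^ (2 * m - 2) ≤ l ^ (2 * m - 2) :=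
    pow_le_pow_left₀ h2 hl _
  have hco : (0:ℝ) ≤ 2 * m * (2 * m - 1) * t := by
    have : (0:ℝ) ≤ 2 * (m:ℝ) - 1 := by linarith
    exact mul_nonneg (mul_nonneg (by positivity) this) ht.le
  exact mul_le_mul_of_nonneg_left hp hco

lemma spPhi1_gap (m : ℕ) (hm : 1 ≤ m) (t : ℝ) (ht : 0 < t) {u v : ℝ}
    (hu : spLam m t / 2 ≤ u) (huv : u ≤ v) :
    spMu m t * (v - u) ≤ spPhi1 m t v - spPhi1 m t u := by
  set μ := spMu m t
  set ψ : ℝ → ℝ := fun l => spPhi1 m t l - μ * l with hψdef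
  have hψ : ∀ x : ℝ, HasDerivAt ψ (spPhi2 m t x - μ) x := by
    intro x
    have h1 := (hasDerivAt_spPhi1 m hm t x).sub ((hasDerivAt_id x).const_mul μ)
    exact h1.congr_deriv (by ring)
  have hmono : MonotoneOn ψ (Set.Ici (spLam m t / 2)) := by
    apply monotoneOn_of_deriv_nonneg (convex_Ici _)
    · exact (Continuous.continuousOn (by
        have : Continuous (spPhi1 m t) := continuous_spPhi1 m t
        fun_prop))
    · intro x _
      exact (hψ x).differentiableAt.differentiableWithinAt
    · intro x hx
      rw [interior_Ici] at hx
      rw [(hψ x).deriv]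
      have := spPhi2_ge m hm t ht x (le_of_lt hx)
      linarith
  have := hmono (Set.mem_Ici.mpr hu) (Set.mem_Ici.mpr (hu.trans huv)) huv
  simp only [hψdef] at this
  linarith
lemma sp_F_bound (m : ℕ) (hm : 1 ≤ m) (t : ℝ) (ht : 0 < t) (x : ℝ)
    (hx : x ∈ Set.Icc (spLam m t / 2) (2 * spLam m t)) :
    ‖∫ l in (spLam m t / 2)..x, spE m t l‖ ≤ 10 / Real.sqrt (spMu m t) := by
  obtain ⟨hax, hxb⟩ := Set.mem_Icc.mp hx
  set a := spLam m t / 2 with ha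
  set c := spLam m t with hc
  set μ := spMu m t with hμdef
  have hμ : 0 < μ := spMu_pos m hm t ht
  have hs : 0 < Real.sqrt μ := Real.sqrt_pos.mpr hμ
  set δ := 1 / Real.sqrt μ with hδdef
  have hδ : 0 < δ := by positivity
  have hεδ : μ * δ = Real.sqrt μ := by
    rw [hδdef, mul_one_div, Real.div_sqrt]
  have hcrit : spPhi1 m t c = 0 := spPhi1_crit m hm t ht
  have hac : a ≤ c := by
    have := spLam_pos m hm t ht
    rw [ha, hc]; linarith
  set m1 := max a (min x (c - δ)) with hm1
  set m2 := max a (min x (c + δ)) with hm2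
  have h_am1 : a ≤ m1 := le_max_left _ _
  have h_m1x : m1 ≤ x := max_le hax (min_le_left _ _)
  have h_m12 : m1 ≤ m2 :=
    max_le_max le_rfl (min_le_min le_rfl (by linarith))
  have h_m2x : m2 ≤ x := max_le hax (min_le_left _ _)
  have hcE : Continuous (spE m t) := continuous_spE m t
  have hint : ∀ p q : ℝ, IntervalIntegrable (spE m t) volume p q := fun p q =>
    hcE.intervalIntegrable p q
  have hsplit : ∫ l in a..x, spE m t l =
      (∫ l in a..m1, spE m t l) + (∫ l in m1..m2, spE m t l)
        + (∫ l in m2..x, spE m t l) := by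
    rw [intervalIntegral.integral_add_adjacent_intervals (hint a m1) (hint m1 m2),
      intervalIntegral.integral_add_adjacent_intervals (hint a m2) (hint m2 x)]
  -- left piece
  have hleft : ‖∫ l in a..m1, spE m t l‖ ≤ 4 / Real.sqrt μ := by
    rcases eq_or_lt_of_le h_am1 with heq | hlt
    · rw [← heq, intervalIntegral.integral_same]
      simp
      positivity
    · have hm1' : m1 = min x (c - δ) := by
        rcases max_cases a (min x (c - δ)) with ⟨h1, h2⟩ | ⟨h1, h2⟩
        · exfalso
          rw [hm1] at hlt
          rw [h1] at hlt
          exact lt_irrefl a hlt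
        · rw [hm1]; exact h1
      have hm1cd : m1 ≤ c - δ := by rw [hm1']; exact min_le_right _ _
      apply sp_osc m hm t ht a m1 (Real.sqrt μ) h_am1 hs
      intro l hl
      obtain ⟨hla, hlm⟩ := Set.mem_Icc.mp hl
      have hlc : l ≤ c := by linarith
      have hgap := spPhi1_gap m hm t ht (u := l) (v := c) hla hlc
      rw [hcrit] at hgap
      have h1 : μ * δ ≤ μ * (c - l) :=
        mul_le_mul_of_nonneg_left (by linarith) hμ.le
      have h2 : Real.sqrt μ ≤ -spPhi1 m t l := by
        rw [← hεδ]; linarith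
      calc Real.sqrt μ ≤ -spPhi1 m t l := h2
        _ ≤ |spPhi1 m t l| := neg_le_abs _
  -- right piece
  have hright : ‖∫ l in m2..x, spE m t l‖ ≤ 4 / Real.sqrt μ := by
    rcases eq_or_lt_of_le h_m2x with heq | hlt
    · rw [heq, intervalIntegral.integral_same]
      simp
      positivity
    · have hcx : c + δ ≤ x := by
        by_contra h'
        push_neg at h'
        have : m2 = x := by
          rw [hm2, min_eq_left h'.le, max_eq_right hax]
        linarith
      have hm2cd : c + δ ≤ m2 := by
        rw [hm2, min_eq_right hcx]
        exact le_max_right _ _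
      apply sp_osc m hm t ht m2 x (Real.sqrt μ) h_m2x hs
      intro l hl
      obtain ⟨hlm, hlx⟩ := Set.mem_Icc.mp hl
      have hcl : c ≤ l := by linarith
      have hgap := spPhi1_gap m hm t ht (u := c) (v := l) (by rw [← hc]; linarith) hcl
      rw [hcrit] at hgap
      have h1 : μ * δ ≤ μ * (l - c) :=
        mul_le_mul_of_nonneg_left (by linarith) hμ.le
      have h2 : Real.sqrt μ ≤ spPhi1 m t l := by
        rw [← hεδ]; linarith
      calc Real.sqrt μ ≤ spPhi1 m t l := h2
        _ ≤ |spPhi1 m t l| := le_abs_self _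
  -- middle piece
  have hmid : ‖∫ l in m1..m2, spE m t l‖ ≤ 2 / Real.sqrt μ := by
    have h1 : ‖∫ l in m1..m2, spE m t l‖ ≤ 1 * |m2 - m1| := by
      apply intervalIntegral.norm_integral_le_of_norm_le_const
      intro l _
      rw [norm_spE]
    have hminle : min x (c + δ) ≤ min x (c - δ) + 2 * δ := by
      rcases le_total x (c - δ) with h' | h'
      · rw [min_eq_left h']
        have := min_le_left x (c + δ)
        linarith
      · rw [min_eq_right h']
        have := min_le_right x (c + δ)
        linarith
    have h2 : m2 ≤ m1 + 2 * δ := by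
      rw [hm2]
      apply max_le
      · linarith
      · have : min x (c - δ) ≤ m1 := le_max_right _ _
        linarith
    have h3 : |m2 - m1| ≤ 2 * δ := by
      rw [_root_.abs_of_nonneg (by linarith : (0:ℝ) ≤ m2 - m1)]
      linarith
    calc ‖∫ l in m1..m2, spE m t l‖ ≤ 1 * |m2 - m1| := h1
      _ ≤ 2 * δ := by linarith
      _ = 2 / Real.sqrt μ := by rw [hδdef]; ring
  rw [hsplit]
  calc ‖(∫ l in a..m1, spE m t l) + (∫ l in m1..m2, spE m t l)
        + (∫ l in m2..x, spE m t l)‖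
      ≤ ‖(∫ l in a..m1, spE m t l) + (∫ l in m1..m2, spE m t l)‖
        + ‖∫ l in m2..x, spE m t l‖ := norm_add_le _ _
    _ ≤ ‖∫ l in a..m1, spE m t l‖ + ‖∫ l in m1..m2, spE m t l‖
        + ‖∫ l in m2..x, spE m t l‖ := by
        have := norm_add_le (∫ l in a..m1, spE m t l) (∫ l in m1..m2, spE m t l)
        linarith
    _ ≤ 4 / Real.sqrt μ + 2 / Real.sqrt μ + 4 / Real.sqrt μ := by linarith
    _ = 10 / Real.sqrt μ := by ring
/-- Stationary phase region bound (van der Corput with second derivative lower bound):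
for the phase `φ(λ) = tλ^{2m} - λ` with critical point `λ₀ = (2mt)^{-1/(2m-1)}` and a
`C¹` amplitude `g` supported in `[λ₀/2, 2λ₀]` with `∫|g'| ≤ B`,
`|∫ e^{iφ} g| ≤ C_m (t λ₀^{2m-2})^{-1/2} B`. -/
theorem stationary_phase_region_bound (m n : ℕ) (hm : 1 ≤ m) (hn : 1 ≤ n) :
    ∃ C : ℝ, 0 < C ∧ ∀ t : ℝ, 0 < t → ∀ g : ℝ → ℂ, ∀ B : ℝ,
      ContDiff ℝ 1 g →
      Function.support g ⊆
        Set.Icc ((2 * m * t) ^ (-(1 : ℝ) / (2 * m - 1)) / 2)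
                (2 * (2 * m * t) ^ (-(1 : ℝ) / (2 * m - 1))) →
      (∫ l : ℝ, ‖deriv g l‖) ≤ B →
      ‖∫ l in Set.Ioi (0 : ℝ),
          Complex.exp (Complex.I * ((t * l ^ (2 * m) - l : ℝ) : ℂ)) * g l‖ ≤
        C * (t * ((2 * m * t) ^ (-(1 : ℝ) / (2 * m - 1))) ^ (2 * (m : ℝ) - 2)) ^ (-(1 : ℝ) / 2)
          * B := by
  have hm1 : (1:ℝ) ≤ (m:ℝ) := by exact_mod_cast hm
  set cm : ℝ := 2 * m * (2 * m - 1) / 2 ^ (2 * m - 2) with hcmdef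
  have hcm : 0 < cm := by
    have h3 : (0:ℝ) < 2 * (m:ℝ) - 1 := by linarith
    rw [hcmdef]
    positivity
  refine ⟨10 / Real.sqrt cm, by positivity, ?_⟩
  intro t ht g B hg hsupp hB
  set lam := spLam m t with hlamdef
  have hlam : 0 < lam := spLam_pos m hm t ht
  set a := lam / 2 with hadef
  set b := 2 * lam with hbdef
  have ha0 : 0 < a := by rw [hadef]; linarith
  have hab : a ≤ b := by rw [hadef, hbdef]; linarith
  have hsupp' : Function.support g ⊆ Set.Icc a b := hsupp
  have hgc : Continuous g := hg.continuous
  have hg'c : Continuous (deriv g) := hg.continuous_deriv le_rfl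
  have hgd : ∀ x : ℝ, HasDerivAt g (deriv g x) x := fun x =>
    ((hg.differentiable one_ne_zero) x).hasDerivAt
  -- boundary values of g vanish
  have hga : g a = 0 := by
    have h0 : Set.EqOn g 0 (Set.Iio a) := by
      intro x hx
      by_contra h'
      have := hsupp' (Function.mem_support.mpr h')
      have := (Set.mem_Icc.mp this).1
      simp only [Set.mem_Iio] at hx
      linarith
    have := h0.closure hgc continuous_const
    have h2 := this (by rw [closure_Iio]; exact Set.mem_Iic.mpr le_rfl)
    simpa using h2
  have hgb : g b = 0 := by
    have h0 : Set.EqOn g 0 (Set.Ioi b) := by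
      intro x hx
      by_contra h'
      have := hsupp' (Function.mem_support.mpr h')
      have := (Set.mem_Icc.mp this).2
      simp only [Set.mem_Ioi] at hx
      linarith
    have := h0.closure hgc continuous_const
    have h2 := this (by rw [closure_Ioi]; exact Set.mem_Ici.mpr le_rfl)
    simpa using h2
  -- integrability of ‖g'‖ on ℝ
  have hcs : HasCompactSupport g := by
    apply HasCompactSupport.of_support_subset_isCompact isCompact_Icc hsupp'
  have hint' : Integrable (fun l => ‖deriv g l‖) := by
    exact (hg'c.norm).integrable_of_hasCompactSupport (hcs.deriv.norm)
  have hB0 : 0 ≤ B :=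
    le_trans (integral_nonneg (fun x => norm_nonneg _)) hB
  -- reduce the set integral to an interval integral
  have hEg : ∀ l : ℝ,
      Complex.exp (Complex.I * ((t * l ^ (2 * m) - l : ℝ) : ℂ)) = spE m t l :=
    fun l => rfl
  have hsuppEg : Function.support (fun l => spE m t l * g l) ⊆ Set.Ioc a b := by
    intro x hx
    have hgx : g x ≠ 0 := by
      intro h0
      apply Function.mem_support.mp hx
      rw [h0, mul_zero]
    have hxI := Set.mem_Icc.mp (hsupp' (Function.mem_support.mpr hgx))
    rcases eq_or_lt_of_le hxI.1 with heq | hlt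
    · exact absurd (heq ▸ hga) hgx
    · exact Set.mem_Ioc.mpr ⟨hlt, hxI.2⟩
  have h1 : ∫ l in Set.Ioi (0:ℝ), spE m t l * g l = ∫ l : ℝ, spE m t l * g l := by
    apply setIntegral_eq_integral_of_forall_compl_eq_zero
    intro x hx
    simp only [Set.mem_Ioi, not_lt] at hx
    have hgx : g x = 0 := by
      by_contra h'
      have := (Set.mem_Icc.mp (hsupp' (Function.mem_support.mpr h'))).1
      linarith
    rw [hgx, mul_zero]
  have h2 : ∫ l in a..b, spE m t l * g l = ∫ l : ℝ, spE m t l * g l :=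
    intervalIntegral.integral_eq_integral_of_support_subset hsuppEg
  -- integration by parts
  set F : ℝ → ℂ := fun x => ∫ l in a..x, spE m t l with hFdef
  have hF : ∀ x : ℝ, HasDerivAt F (spE m t x) x := fun x =>
    ((continuous_spE m t).integral_hasStrictDerivAt a x).hasDerivAt
  have hFc : Continuous F := by
    rw [continuous_iff_continuousAt]
    exact fun x => (hF x).continuousAt
  have hintE : IntervalIntegrable (spE m t) volume a b :=
    (continuous_spE m t).intervalIntegrable a b
  have hintg' : IntervalIntegrable (deriv g) volume a b :=
    hg'c.intervalIntegrable a b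
  have hIBP : ∫ x in a..b, (spE m t x * g x + F x * deriv g x)
      = F b * g b - F a * g a :=
    intervalIntegral.integral_deriv_mul_eq_sub
      (fun x _ => hF x) (fun x _ => hgd x) hintE hintg'
  have hFa : F a = 0 := intervalIntegral.integral_same
  have hintEg : IntervalIntegrable (fun x => spE m t x * g x) volume a b :=
    ((continuous_spE m t).mul hgc).intervalIntegrable a b
  have hintFg' : IntervalIntegrable (fun x => F x * deriv g x) volume a b :=
    (hFc.mul hg'c).intervalIntegrable a b
  have hEq : ∫ x in a..b, spE m t x * g x = - ∫ x in a..b, F x * deriv g x := by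
    have h := hIBP
    rw [intervalIntegral.integral_add hintEg hintFg', hgb, hFa] at h
    rw [mul_zero, zero_mul, sub_zero] at h
    exact eq_neg_of_add_eq_zero_left h
  -- norm bound
  set μ := spMu m t with hμdef
  have hμ : 0 < μ := spMu_pos m hm t ht
  have hsμ : 0 < Real.sqrt μ := Real.sqrt_pos.mpr hμ
  have hM0 : 0 ≤ 10 / Real.sqrt μ := by positivity
  have hnormbound : ‖∫ x in a..b, F x * deriv g x‖ ≤ (10 / Real.sqrt μ) * B := by
    calc ‖∫ x in a..b, F x * deriv g x‖
        ≤ ∫ x in a..b, ‖F x * deriv g x‖ :=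
          intervalIntegral.norm_integral_le_integral_norm hab
      _ ≤ ∫ x in a..b, (10 / Real.sqrt μ) * ‖deriv g x‖ := by
          apply intervalIntegral.integral_mono_on hab
          · exact ((hFc.mul hg'c).norm).intervalIntegrable a b
          · exact (continuous_const.mul hg'c.norm).intervalIntegrable a b
          · intro x hx
            rw [norm_mul]
            apply mul_le_mul_of_nonneg_right _ (norm_nonneg _)
            exact sp_F_bound m hm t ht x hx
      _ = (10 / Real.sqrt μ) * ∫ x in a..b, ‖deriv g x‖ :=
          intervalIntegral.integral_const_mul _ _
      _ ≤ (10 / Real.sqrt μ) * B := by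
          apply mul_le_mul_of_nonneg_left _ hM0
          have hio : ∫ x in a..b, ‖deriv g x‖ = ∫ x in Set.Ioc a b, ‖deriv g x‖ :=
            intervalIntegral.integral_of_le hab
          rw [hio]
          exact le_trans (setIntegral_le_integral hint'
            (Filter.Eventually.of_forall (fun x => norm_nonneg _))) hB
  -- constants
  set X := t * lam ^ (2 * m - 2) with hXdef
  have hX : 0 < X := by
    rw [hXdef]
    have := pow_pos hlam (2 * m - 2)
    positivity
  have hμX : μ = cm * X := by
    rw [hμdef, hcmdef, hXdef]
    show spMu m t = _
    unfold spMu
    rw [hlamdef] at *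
    rw [div_pow]
    have h2ne : (2:ℝ) ^ (2 * m - 2) ≠ 0 := by positivity
    field_simp
  have hcast : (2 * (m:ℝ) - 2) = ((2 * m - 2 : ℕ) : ℝ) := by
    have h2m : 2 ≤ 2 * m := by omega
    push_cast [h2m]
    ring
  have hbase : t * lam ^ (2 * (m:ℝ) - 2) = X := by
    rw [hcast, Real.rpow_natCast, hXdef]
  have hrpow : X ^ (-(1:ℝ)/2) = (Real.sqrt X)⁻¹ := by
    rw [show (-(1:ℝ)/2) = -(1/2 : ℝ) by ring, Real.rpow_neg hX.le,
      ← Real.sqrt_eq_rpow]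
  have hsqrtμ : Real.sqrt μ = Real.sqrt cm * Real.sqrt X := by
    rw [hμX, Real.sqrt_mul hcm.le]
  have hconst : 10 / Real.sqrt μ = 10 / Real.sqrt cm * (Real.sqrt X)⁻¹ := by
    rw [hsqrtμ, div_mul_eq_div_div, div_eq_mul_inv (10 / Real.sqrt cm)]
  have hlamlit : (2 * (m:ℝ) * t) ^ (-(1:ℝ) / (2 * (m:ℝ) - 1)) = lam := rfl
  simp only [hEg]
  rw [h1, ← h2, hEq, norm_neg]
  refine le_trans hnormbound ?_
  rw [hlamlit, hbase, hrpow, hconst]
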